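/- Let G be a finite abelian noncyclic group of order p^n (p prime). Then the number of maximal cyclic subgroups of G is at least (p-1)(n-2) + p + 1, and hence at least n + 1. -/

import Mathlib

universe u

open Subgroup

def IsMaximalCyclic {G : Type*} [Group G] (H : Subgroup G) : Prop :=
  IsCyclic H ∧ ∀ K : Subgroup G, IsCyclic K → H ≤ K → H = K

namespace MaxCycAux

lemma zpowers_isCyclic {G : Type*} [Group G] (g : G) : IsCyclic (zpowers g) := by
  refine ⟨⟨⟨g, mem_zpowers g⟩, fun x => ?_⟩⟩
  obtain ⟨t, ht⟩ := x.2
  exact ⟨t, Subtype.ext (by simpa using ht)⟩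

lemma isCyclic_exists {G : Type*} [Group G] {K : Subgroup G} (h : IsCyclic K) :
    ∃ k : G, K = zpowers k := by
  obtain ⟨⟨⟨k, hk⟩, hgen⟩⟩ := h
  refine ⟨k, le_antisymm (fun x hx => ?_) ((zpowers_le).2 hk)⟩
  obtain ⟨t, ht⟩ := hgen ⟨x, hx⟩
  exact ⟨t, by simpa using congrArg Subtype.val ht⟩

lemma sub_eq_of_le_of_card_le {G : Type*} [Group G] [Finite G] {H K : Subgroup G}
    (h : H ≤ K) (hc : Nat.card K ≤ Nat.card H) : H = K := by
  refine SetLike.ext' (Set.eq_of_subset_of_ncard_le h ?_ (K : Set G).toFinite)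
  rwa [← Nat.card_coe_set_eq, ← Nat.card_coe_set_eq]

lemma mem_pRange {G : Type*} [CommGroup G] {p : ℕ} {g : G} :
    g ∈ (powMonoidHom p : G →* G).range ↔ ∃ h : G, h ^ p = g := by
  simp [MonoidHom.mem_range, powMonoidHom_apply]

lemma orderOf_pPow {G : Type*} [Group G] [Finite G] {p n : ℕ} (hp : p.Prime)
    (hG : Nat.card G = p ^ n) (g : G) : ∃ s, orderOf g = p ^ s := by
  have := hG ▸ orderOf_dvd_natCard g
  obtain ⟨s, -, hs⟩ := (Nat.dvd_prime_pow hp).1 this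
  exact ⟨s, hs⟩

lemma not_maximal_bot {G : Type*} [Group G] [Nontrivial G] :
    ¬ IsMaximalCyclic (⊥ : Subgroup G) := by
  rintro ⟨-, h⟩
  obtain ⟨g, hg⟩ := exists_ne (1 : G)
  have hb := h (zpowers g) (zpowers_isCyclic g) bot_le
  exact hg (Subgroup.mem_bot.1 (hb ▸ mem_zpowers g))

lemma maximal_of_not_pow {G : Type*} [CommGroup G] [Finite G] {p n : ℕ} (hp : p.Prime)
    (hG : Nat.card G = p ^ n) {g : G} (hg : g ∉ (powMonoidHom p : G →* G).range) :
    IsMaximalCyclic (zpowers g) := by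
  refine ⟨zpowers_isCyclic g, fun K hK hle => ?_⟩
  obtain ⟨k, rfl⟩ := isCyclic_exists hK
  obtain ⟨t, ht⟩ := hle (mem_zpowers g)
  by_cases hk1 : k = 1
  · exact absurd ⟨1, by simp [powMonoidHom_apply, ← ht, hk1]⟩ hg
  obtain ⟨s, hs⟩ := orderOf_pPow hp hG k
  have hs1 : 1 ≤ s := by
    rcases Nat.eq_zero_or_pos s with h0 | h1
    · exact absurd (orderOf_eq_one_iff.1 (by rw [hs, h0, pow_zero])) hk1
    · exact h1
  by_cases hdvd : (p : ℤ) ∣ t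
  · obtain ⟨u, rfl⟩ := hdvd
    refine absurd ⟨k ^ u, ?_⟩ hg
    rw [powMonoidHom_apply, ← zpow_natCast (k ^ u) p, ← zpow_mul, mul_comm]
    exact ht
  · -- let r be t mod p^s
    set r : ℤ := t % (p ^ s : ℕ) with hr
    have hord : k ^ (p ^ s : ℕ) = 1 := by rw [← hs]; exact pow_orderOf_eq_one k
    have hkt : k ^ r = g := by
      have hdec : ((p ^ s : ℕ) : ℤ) * (t / ((p ^ s : ℕ) : ℤ)) + r = t := Int.mul_ediv_add_emod t _
      have hg' : k ^ t = g := ht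
      calc k ^ r = k ^ (((p ^ s : ℕ) : ℤ) * (t / ((p ^ s : ℕ) : ℤ)) + r) := by
              rw [zpow_add, zpow_mul, zpow_natCast, hord, one_zpow, one_mul]
        _ = k ^ t := by rw [hdec]
        _ = g := hg'
    have hrpos : 0 ≤ r := Int.emod_nonneg t (Int.natCast_ne_zero.2 (pow_pos hp.pos s).ne')
    set m : ℕ := r.toNat with hm
    have hkm : k ^ m = g := by
      rw [← hkt, ← zpow_natCast, hm, Int.toNat_of_nonneg hrpos]
    have hpm : ¬ (p ∣ m) := by
      intro hpmd
      apply hdvd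
      have h1 : (p : ℤ) ∣ r := by
        rw [← Int.toNat_of_nonneg hrpos]
        exact_mod_cast Int.natCast_dvd_natCast.2 hpmd
      have h2 : (p : ℤ) ∣ ((p ^ s : ℕ) : ℤ) := by
        push_cast
        exact dvd_pow_self _ (by omega)
      have := Int.mul_ediv_add_emod t ((p ^ s : ℕ) : ℤ)
      rw [← this]
      exact dvd_add (Dvd.dvd.mul_right h2 _) h1
    have hcop : Nat.Coprime m (p ^ s) :=
      Nat.Coprime.pow_right s (((Nat.Prime.coprime_iff_not_dvd hp).2 hpm).symm)
    obtain ⟨u, -, hu⟩ := Nat.exists_mul_mod_eq_one_of_coprime hcop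
      (Nat.one_lt_pow (by omega) hp.one_lt)
    have hk_mem : k ∈ zpowers g := by
      refine ⟨(u : ℤ), ?_⟩
      show g ^ (u : ℤ) = k
      rw [← hkm, zpow_natCast, ← pow_mul, ← pow_mod_orderOf, hs, hu, pow_one]
    exact le_antisymm hle (zpowers_le.2 hk_mem)

lemma exists_gen_of_maximal {G : Type*} [CommGroup G] [Finite G] [Nontrivial G] {p n : ℕ}
    (hp : p.Prime) (hG : Nat.card G = p ^ n) {H : Subgroup G} (hH : IsMaximalCyclic H) :
    ∃ g : G, H = zpowers g ∧ g ∉ (powMonoidHom p : G →* G).range := by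
  obtain ⟨k, rfl⟩ := isCyclic_exists hH.1
  have hk1 : k ≠ 1 := by
    rintro rfl
    rw [zpowers_one_eq_bot] at hH
    exact not_maximal_bot hH
  refine ⟨k, rfl, fun hk => ?_⟩
  obtain ⟨h, hh⟩ := hk
  have hh' : h ^ p = k := hh
  have hle : zpowers k ≤ zpowers h :=
    zpowers_le.2 ⟨(p : ℤ), show h ^ (p : ℤ) = k by rw [zpow_natCast]; exact hh'⟩
  have heq := hH.2 _ (zpowers_isCyclic h) hle
  obtain ⟨t, ht⟩ := heq ▸ mem_zpowers h
  have ht' : k ^ t = h := ht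
  have hk2 : k ^ (t * p - 1) = 1 := by
    rw [zpow_sub, zpow_mul, ht', zpow_natCast, hh', zpow_one, mul_inv_cancel]
  have hdvd : (orderOf k : ℤ) ∣ t * p - 1 := orderOf_dvd_iff_zpow_eq_one.2 hk2
  obtain ⟨s, hs⟩ := orderOf_pPow hp hG k
  have hs1 : 1 ≤ s := by
    rcases Nat.eq_zero_or_pos s with h0 | h1
    · exact absurd (orderOf_eq_one_iff.1 (by rw [hs, h0, pow_zero])) hk1
    · exact h1
  have hp1 : (p : ℤ) ∣ t * p - 1 := by
    refine dvd_trans ?_ hdvd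
    rw [hs]
    exact_mod_cast dvd_pow_self (p : ℤ) (by omega)
  have h11 : (p : ℤ) ∣ 1 := by
    have hd2 : (p : ℤ) ∣ t * p := ⟨t, mul_comm _ _⟩
    have := dvd_sub hd2 hp1
    simpa using this
  have := Int.le_of_dvd one_pos h11
  have := hp.two_le
  omega

lemma exists_maximal_mem {G : Type*} [Group G] [Finite G] (g : G) :
    ∃ H : Subgroup G, IsMaximalCyclic H ∧ g ∈ H := by
  have hfin : ({K : Subgroup G | IsCyclic K ∧ g ∈ K}).Finite := Set.toFinite _
  obtain ⟨K, ⟨hKc, hKm⟩, hmax⟩ := Set.Finite.exists_maximalFor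
    (fun K : Subgroup G => Nat.card K) _ hfin ⟨zpowers g, zpowers_isCyclic g, mem_zpowers g⟩
  refine ⟨K, ⟨hKc, fun K' hK' hle => ?_⟩, hKm⟩
  exact sub_eq_of_le_of_card_le hle
    ((hmax ⟨hK', hle hKm⟩ (Subgroup.card_le_of_le hle)))

lemma mem_zpowers_of_orderp {G : Type*} [Group G] [Finite G] {p n : ℕ} (hp : p.Prime)
    (hG : Nat.card G = p ^ n) {h x y : G} (hx : x ∈ zpowers h) (hy : y ∈ zpowers h)
    (hx1 : x ≠ 1) (hxp : x ^ p = 1) (hy1 : y ≠ 1) (hyp : y ^ p = 1) : x ∈ zpowers y := by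
  have hh1 : h ≠ 1 := by
    rintro rfl
    rw [zpowers_one_eq_bot] at hx
    exact hx1 (Subgroup.mem_bot.1 hx)
  obtain ⟨s, hs⟩ := orderOf_pPow hp hG h
  have hs1 : 1 ≤ s := by
    rcases Nat.eq_zero_or_pos s with h0 | h1
    · exact absurd (orderOf_eq_one_iff.1 (by rw [hs, h0, pow_zero])) hh1
    · exact h1
  set w : G := h ^ (p ^ (s - 1)) with hw
  have hclaim : ∀ z : G, z ∈ zpowers h → z ^ p = 1 → z ∈ zpowers w := by
    intro z hz hzp
    obtain ⟨t, ht⟩ := hz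
    have ht' : h ^ t = z := ht
    have h1 : h ^ (t * p) = 1 := by rw [zpow_mul, ht', zpow_natCast, hzp]
    have h2 : ((p ^ s : ℕ) : ℤ) ∣ t * p := by
      rw [← hs]; exact orderOf_dvd_iff_zpow_eq_one.2 h1
    have h3 : ((p ^ (s - 1) : ℕ) : ℤ) ∣ t := by
      have hps : ((p ^ s : ℕ) : ℤ) = ((p ^ (s - 1) : ℕ) : ℤ) * (p : ℤ) := by
        push_cast
        rw [← pow_succ]
        congr 1
        omega
      rw [hps] at h2
      obtain ⟨c, hc⟩ := h2
      have hpz : (p : ℤ) ≠ 0 := Int.natCast_ne_zero.2 hp.pos.ne'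
      refine ⟨c, mul_right_cancel₀ hpz ?_⟩
      rw [hc]; ring
    obtain ⟨u, hu⟩ := h3
    refine ⟨u, ?_⟩
    show w ^ u = z
    rw [hw, ← zpow_natCast h, ← zpow_mul, ← hu, ht']
  have hxw := hclaim x hx hxp
  have hyw := hclaim y hy hyp
  haveI : Fact p.Prime := ⟨hp⟩
  have hps' : p ^ (s - 1) * p = p ^ s := by rw [← pow_succ]; congr 1; omega
  have hwp : w ^ p = 1 := by
    rw [hw, ← pow_mul, hps', ← hs]
    exact pow_orderOf_eq_one h
  have hcardw : Nat.card (zpowers w) ≤ p := by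
    rw [Nat.card_zpowers]
    exact Nat.le_of_dvd hp.pos (orderOf_dvd_of_pow_eq_one hwp)
  have hordy : orderOf y = p := orderOf_eq_prime hyp hy1
  have heq : zpowers y = zpowers w := by
    refine sub_eq_of_le_of_card_le (zpowers_le.2 hyw) ?_
    rw [Nat.card_zpowers y, hordy]
    exact hcardw
  rw [heq]
  exact hxw

lemma isCyclic_of_sup {G : Type*} [CommGroup G] [Finite G] {p n : ℕ} (hp : p.Prime)
    (hG : Nat.card G = p ^ n) (g : G)
    (hsup : zpowers g ⊔ (powMonoidHom p : G →* G).range = ⊤) : IsCyclic G := by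
  haveI : Fact p.Prime := ⟨hp⟩
  set T := zpowers g with hT
  have hsurj : Function.Surjective (fun q : G ⧸ T => q ^ p) := by
    intro q
    obtain ⟨x, rfl⟩ := QuotientGroup.mk_surjective q
    obtain ⟨a, ha, b, hb, hab⟩ := Subgroup.mem_sup.1 (hsup ▸ Subgroup.mem_top x)
    obtain ⟨c, rfl⟩ := hb
    refine ⟨QuotientGroup.mk c, ?_⟩
    show (QuotientGroup.mk c : G ⧸ T) ^ p = QuotientGroup.mk x
    rw [← QuotientGroup.mk_pow, QuotientGroup.eq]
    have hc : (powMonoidHom p) c = c ^ p := rfl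
    rw [hc] at hab
    rw [← hab]
    have heq : (c ^ p)⁻¹ * (a * c ^ p) = a := by
      rw [mul_comm a, ← mul_assoc, inv_mul_cancel, one_mul]
    rw [heq]
    exact ha
  have hinj : Function.Injective (fun q : G ⧸ T => q ^ p) :=
    Finite.injective_iff_surjective.2 hsurj
  have hdvd : Nat.card (G ⧸ T) ∣ p ^ n :=
    hG ▸ Dvd.intro _ (Subgroup.card_eq_card_quotient_mul_card_subgroup T).symm
  obtain ⟨j, hjn, hj⟩ := (Nat.dvd_prime_pow hp).1 hdvd
  have hj0 : j = 0 := by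
    by_contra hj0
    have : p ∣ Nat.card (G ⧸ T) := hj ▸ dvd_pow_self p hj0
    obtain ⟨z, hz⟩ := exists_prime_orderOf_dvd_card' p this
    have hz1 : z ≠ 1 := by
      intro h; rw [h, orderOf_one] at hz; exact hp.one_lt.ne' hz.symm
    have : z ^ p = 1 := hz ▸ pow_orderOf_eq_one z
    exact hz1 (hinj (a₁ := z) (a₂ := 1) (by simpa using this))
  have hcard : Nat.card T = Nat.card G := by
    have := Subgroup.card_eq_card_quotient_mul_card_subgroup T
    rw [hj, hj0, pow_zero, one_mul] at this
    exact this.symm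
  have : T = ⊤ := Subgroup.eq_top_of_card_eq T hcard
  refine ⟨⟨g, fun x => ?_⟩⟩
  have : x ∈ T := this ▸ Subgroup.mem_top x
  exact this

lemma isCyclic_of_few {p : ℕ} (hp : p.Prime) :
    ∀ (m : ℕ) (G : Type u) [CommGroup G] [Finite G],
      Nat.card G = p ^ m → Nat.card ((powMonoidHom p : G →* G).ker) ≤ p → IsCyclic G := by
  haveI : Fact p.Prime := ⟨hp⟩
  intro m
  induction m with
  | zero =>
    intro G _ _ hG _
    haveI : Subsingleton G := (Nat.card_eq_one_iff_unique.1 (by simpa using hG)).1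
    infer_instance
  | succ m ih =>
    intro G _ _ hG hker
    rcases Nat.eq_zero_or_pos m with rfl | hm
    · exact isCyclic_of_prime_card (p := p) (by simpa using hG)
    set K := (powMonoidHom p : G →* G).ker with hK
    set R := (powMonoidHom p : G →* G).range with hR
    have hcardmul : Nat.card G = Nat.card R * Nat.card K := by
      rw [Subgroup.card_eq_card_quotient_mul_card_subgroup K]
      congr 1
      exact Nat.card_congr (QuotientGroup.quotientKerEquivRange _).toEquiv
    -- K nontrivial
    obtain ⟨z, hz⟩ := exists_prime_orderOf_dvd_card' (G := G) p
      (by rw [hG]; exact dvd_pow_self p (by omega))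
    have hzK : z ∈ K := by
      rw [hK, MonoidHom.mem_ker, powMonoidHom_apply, ← hz]
      exact pow_orderOf_eq_one z
    have hz1 : z ≠ 1 := by
      intro h; rw [h, orderOf_one] at hz; exact hp.one_lt.ne' hz.symm
    have hKdvd : Nat.card K ∣ p ^ (m + 1) := hG ▸ Subgroup.card_subgroup_dvd_card K
    obtain ⟨a, han, ha⟩ := (Nat.dvd_prime_pow hp).1 hKdvd
    have ha1 : 1 ≤ a := by
      by_contra h
      have ha0 : a = 0 := by omega
      rw [ha0, pow_zero] at ha
      have hKbot : K = ⊥ := (Subgroup.eq_bot_iff_card K).2 ha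
      exact hz1 (Subgroup.mem_bot.1 (hKbot ▸ hzK))
    have hKp : Nat.card K = p := le_antisymm hker (by
      rw [ha]; exact Nat.le_self_pow (by omega) p)
    have hcardR : Nat.card R = p ^ m := by
      have : p ^ (m + 1) = Nat.card R * p := by rw [← hG, hcardmul, hKp]
      have hpn : 0 < p := hp.pos
      have := this
      rw [pow_succ] at this
      exact (Nat.mul_right_cancel hpn this.symm)
    have hihker : Nat.card ((powMonoidHom p : R →* R).ker) ≤ p := by
      refine le_trans (Nat.card_le_card_of_injective
        (fun z : ((powMonoidHom p : R →* R).ker) =>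
          (⟨(z.1 : G), by
            have hz2 : (z.1 : R) ^ p = 1 := by
              have := z.2
              rwa [MonoidHom.mem_ker, powMonoidHom_apply] at this
            rw [hK, MonoidHom.mem_ker, powMonoidHom_apply]
            have := congrArg (Subtype.val : R → G) hz2
            simpa using this⟩ : K)) ?_) hker
      intro z w hzw
      have h1 := congrArg (Subtype.val : K → G) hzw
      simp only at h1
      exact Subtype.ext (Subtype.ext h1)
    have hRcyc : IsCyclic R := ih R hcardR hihker
    obtain ⟨h₀, hh₀⟩ := @IsCyclic.exists_ofOrder_eq_natCard R _ hRcyc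
    have hordh : orderOf (h₀ : G) = p ^ m := by
      rw [orderOf_submonoid h₀, hh₀, hcardR]
    obtain ⟨g, hg⟩ := h₀.2
    have hg' : g ^ p = (h₀ : G) := hg
    obtain ⟨a, ha'⟩ : ∃ s, orderOf g = p ^ s := by
      have := hG ▸ orderOf_dvd_natCard g
      obtain ⟨s, -, hs⟩ := (Nat.dvd_prime_pow hp).1 this
      exact ⟨s, hs⟩
    have ha1 : 1 ≤ a := by
      by_contra h
      have ha0 : a = 0 := by omega
      rw [ha0, pow_zero] at ha'
      have : g = 1 := orderOf_eq_one_iff.1 ha'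
      rw [this, one_pow] at hg'
      rw [← hg', orderOf_one] at hordh
      have := Nat.one_lt_pow (by omega : m ≠ 0) hp.one_lt
      omega
    have hord2 : orderOf (g ^ p) = p ^ (a - 1) := by
      rw [orderOf_pow g, ha', Nat.gcd_comm, Nat.gcd_eq_left (dvd_pow_self p (by omega)),
        show p ^ a = p ^ (a - 1) * p by rw [← pow_succ]; congr 1; omega,
        Nat.mul_div_cancel _ hp.pos]
    rw [hg', hordh] at hord2
    have ham : a - 1 = m := Nat.pow_right_injective hp.two_le hord2.symm
    have : orderOf g = Nat.card G := by rw [ha', hG]; congr 1; omega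
    exact isCyclic_of_orderOf_eq_card g this

lemma auxpow' (a : ℕ) (ha : 1 ≤ a) : ∀ b : ℕ, a * (a * b + a + 2) + 1 ≤ (a + 1) ^ (b + 2) := by
  intro b
  induction b with
  | zero =>
    have : (a + 1) ^ (0 + 2) = a * (a * 0 + a + 2) + 1 := by ring
    omega
  | succ b ih =>
    have h1 : (a + 1) ^ (b + 1 + 2) = (a + 1) ^ (b + 2) * (a + 1) := by ring
    have h2 : a ≤ (a + 1) ^ (b + 2) := le_trans (by omega) (Nat.le_self_pow (by omega) (a + 1))
    have h3 : a * (a * (b + 1) + a + 2) + 1 = (a * (a * b + a + 2) + 1) + a * a := by ring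
    have h4 : (a + 1) ^ (b + 2) + a * a ≤ (a + 1) ^ (b + 2) * (a + 1) := by
      have : (a + 1) ^ (b + 2) * (a + 1) = (a + 1) ^ (b + 2) + (a + 1) ^ (b + 2) * a := by ring
      rw [this]
      have := Nat.mul_le_mul_right a h2
      omega
    omega

lemma auxpow {p n : ℕ} (hp : 2 ≤ p) (hn : 2 ≤ n) :
    (p - 1) * ((p - 1) * (n - 2) + p + 1) + 1 ≤ p ^ n := by
  obtain ⟨a, ha, rfl⟩ : ∃ a, 1 ≤ a ∧ p = a + 1 := ⟨p - 1, by omega, by omega⟩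
  obtain ⟨b, rfl⟩ : ∃ b, n = b + 2 := ⟨n - 2, by omega⟩
  have h := auxpow' a ha b
  have h1 : a + 1 - 1 = a := by omega
  have h2 : b + 2 - 2 = b := by omega
  rw [h1, h2]
  have h3 : a * b + (a + 1) + 1 = a * b + a + 2 := by omega
  rw [h3]
  exact h

lemma caseA {G : Type*} [CommGroup G] [Finite G] {p n : ℕ} (hp : p.Prime)
    (hG : Nat.card G = p ^ n) (hn : 2 ≤ n) (hexp : ∀ x : G, x ^ p = 1) :
    (p - 1) * (n - 2) + p + 1 ≤ {H : Subgroup G | IsMaximalCyclic H}.ncard := by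
  classical
  haveI : Fact p.Prime := ⟨hp⟩
  letI := Fintype.ofFinite G
  have hnotR : ∀ g : G, g ≠ 1 → g ∉ (powMonoidHom p : G →* G).range := by
    intro g hg hgR
    obtain ⟨h, hh⟩ := hgR
    have hh' : h ^ p = g := hh
    rw [hexp h] at hh'
    exact hg hh'.symm
  set M := {H : Subgroup G | IsMaximalCyclic H} with hM
  set s : Finset G := Finset.univ.erase 1 with hs
  have hmaxmem : ∀ g : G, g ≠ 1 → zpowers g ∈ M :=
    fun g hg => maximal_of_not_pow hp hG (hnotR g hg)
  have hfib : ∀ H ∈ s.image (fun g => zpowers g),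
      (s.filter (fun x => zpowers x = H)).card ≤ p - 1 := by
    intro H hH
    obtain ⟨a, ha, rfl⟩ := Finset.mem_image.1 hH
    have ha1 : a ≠ 1 := (Finset.mem_erase.1 ha).1
    have hsub : s.filter (fun x => zpowers x = zpowers a) ⊆
        ((zpowers a : Set G).toFinset.erase 1) := by
      intro x hx
      obtain ⟨hxs, hxz⟩ := Finset.mem_filter.1 hx
      refine Finset.mem_erase.2 ⟨(Finset.mem_erase.1 hxs).1, ?_⟩
      rw [Set.mem_toFinset]
      exact hxz ▸ mem_zpowers x
    refine le_trans (Finset.card_le_card hsub) ?_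
    rw [Finset.card_erase_of_mem (by rw [Set.mem_toFinset]; exact one_mem _)]
    have hcard : (zpowers a : Set G).toFinset.card = p := by
      rw [Set.toFinset_card, ← Nat.card_eq_fintype_card]
      have : Nat.card (zpowers a) = p := by
        rw [Nat.card_zpowers, orderOf_eq_prime (hexp a) ha1]
      exact this
    omega
  have hkey := Finset.card_le_mul_card_image s (p - 1) hfib
  have hscard : s.card = p ^ n - 1 := by
    rw [hs, Finset.card_erase_of_mem (Finset.mem_univ 1), Finset.card_univ,
      ← Nat.card_eq_fintype_card, hG]
  have himg : (s.image fun g => zpowers g).card ≤ M.ncard := by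
    have hsub : ↑(s.image fun g => zpowers g) ⊆ M := by
      intro H hH
      obtain ⟨a, ha, rfl⟩ := Finset.mem_image.1 (Finset.mem_coe.1 hH)
      exact hmaxmem a (Finset.mem_erase.1 ha).1
    calc (s.image fun g => zpowers g).card
        = (↑(s.image fun g => zpowers g) : Set (Subgroup G)).ncard :=
          (Set.ncard_coe_finset _).symm
      _ ≤ M.ncard := Set.ncard_le_ncard hsub (Set.toFinite M)
  have htot : p ^ n - 1 ≤ (p - 1) * M.ncard := by
    calc p ^ n - 1 = s.card := hscard.symm
      _ ≤ (p - 1) * (s.image fun g => zpowers g).card := hkey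
      _ ≤ (p - 1) * M.ncard := Nat.mul_le_mul_left _ himg
  have haux := auxpow hp.two_le hn
  have hp1 : 0 < p - 1 := by have := hp.two_le; omega
  refine Nat.le_of_mul_le_mul_left ?_ hp1
  have hpn : 1 ≤ p ^ n := Nat.one_le_pow _ _ hp.pos
  omega

theorem main_bound {p : ℕ} (hp : p.Prime) :
    ∀ (n : ℕ) (G : Type u) [CommGroup G] [Finite G],
      Nat.card G = p ^ n → ¬ IsCyclic G →
      (p - 1) * (n - 2) + p + 1 ≤ {H : Subgroup G | IsMaximalCyclic H}.ncard := by
  haveI : Fact p.Prime := ⟨hp⟩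
  intro n
  induction n using Nat.strong_induction_on with
  | _ n ih =>
  intro G _ _ hG hnc
  haveI hnt : Nontrivial G := by
    rcases subsingleton_or_nontrivial G with h | h
    · exact absurd isCyclic_of_subsingleton hnc
    · exact h
  have hn2 : 2 ≤ n := by
    by_contra hlt
    push_neg at hlt
    interval_cases n
    · rw [pow_zero] at hG
      exact not_subsingleton G (Nat.card_eq_one_iff_unique.1 hG).1
    · rw [pow_one] at hG
      exact hnc (isCyclic_of_prime_card hG)
  by_cases hexp : ∀ x : G, x ^ p = 1
  · exact caseA hp hG hn2 hexp
  push_neg at hexp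
  obtain ⟨x, hx⟩ := hexp
  set R := (powMonoidHom p : G →* G).range with hR
  set z := x ^ p with hzdef
  have hzR : z ∈ R := ⟨x, rfl⟩
  have hz1 : z ≠ 1 := hx
  obtain ⟨s, hs⟩ := orderOf_pPow hp hG z
  have hs1 : 1 ≤ s := by
    rcases Nat.eq_zero_or_pos s with h0 | h1
    · exact absurd (orderOf_eq_one_iff.1 (by rw [hs, h0, pow_zero])) hz1
    · exact h1
  have hps' : p ^ (s - 1) * p = p ^ s := by rw [← pow_succ]; congr 1; omega
  set y := z ^ (p ^ (s - 1)) with hydef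
  have hyp : y ^ p = 1 := by
    rw [hydef, ← pow_mul, hps', ← hs]; exact pow_orderOf_eq_one z
  have hy1 : y ≠ 1 := by
    intro h
    have hdvd : orderOf z ∣ p ^ (s - 1) := orderOf_dvd_of_pow_eq_one (by rw [← hydef]; exact h)
    rw [hs] at hdvd
    have h1 := Nat.le_of_dvd (pow_pos hp.pos _) hdvd
    have h2 := Nat.pow_lt_pow_right hp.one_lt (show s - 1 < s by omega)
    omega
  have hordy : orderOf y = p := orderOf_eq_prime hyp hy1
  have hyR : y ∈ R := pow_mem hzR _
  set N := zpowers y with hNdef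
  have hNcard : Nat.card N = p := by rw [hNdef, Nat.card_zpowers, hordy]
  have hNle : N ≤ R := zpowers_le.2 hyR
  have hx0 : ∃ x₀ : G, orderOf x₀ = p ∧ x₀ ∉ N := by
    by_contra hno
    push_neg at hno
    apply hnc
    refine isCyclic_of_few hp n G hG ?_
    have hkerle : (powMonoidHom p : G →* G).ker ≤ N := by
      intro w hw
      rw [MonoidHom.mem_ker, powMonoidHom_apply] at hw
      by_cases hw1 : w = 1
      · rw [hw1]; exact one_mem N
      · exact hno w (orderOf_eq_prime hw hw1)
    calc Nat.card ((powMonoidHom p : G →* G).ker) ≤ Nat.card N :=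
          Subgroup.card_le_of_le hkerle
      _ = p := hNcard
  obtain ⟨x₀, hx₀ord, hx₀N⟩ := hx0
  have hx₀1 : x₀ ≠ 1 := by
    intro h; rw [h, orderOf_one] at hx₀ord; exact hp.one_lt.ne' hx₀ord.symm
  have hx₀p : x₀ ^ p = 1 := by rw [← hx₀ord]; exact pow_orderOf_eq_one x₀
  obtain ⟨H₀, hH₀max, hx₀H₀⟩ := exists_maximal_mem x₀
  obtain ⟨g₀, hg₀, hg₀R⟩ := exists_gen_of_maximal hp hG hH₀max
  have hyH₀ : y ∉ H₀ := by
    intro hyH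
    exact hx₀N (mem_zpowers_of_orderp hp hG (hg₀ ▸ hx₀H₀) (hg₀ ▸ hyH) hx₀1 hx₀p hy1 hyp)
  set Q := G ⧸ N with hQdef
  set π := QuotientGroup.mk' N with hπdef
  have hπsurj : Function.Surjective π := QuotientGroup.mk'_surjective N
  have hQcard : Nat.card Q = p ^ (n - 1) := by
    have h1 := Subgroup.card_eq_card_quotient_mul_card_subgroup N
    rw [hG, hNcard] at h1
    have h2 : p ^ n = p ^ (n - 1) * p := by rw [← pow_succ]; congr 1; omega
    rw [h2] at h1
    exact (Nat.mul_right_cancel hp.pos h1).symm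
  set RQ := (powMonoidHom p : Q →* Q).range with hRQdef
  have hπmemN : ∀ t : G, t ∈ N → π t = 1 := fun t ht => (QuotientGroup.eq_one_iff t).2 ht
  have hkerN : ∀ g : G, π g = 1 → g ∈ N := fun g hg => (QuotientGroup.eq_one_iff g).1 hg
  have hpre : ∀ g : G, π g ∈ RQ → g ∈ R := by
    intro g hg
    obtain ⟨c, hc⟩ := hg
    obtain ⟨b, rfl⟩ := hπsurj c
    have hc' : π (b ^ p) = π g := by rw [map_pow]; exact hc
    have hker : b ^ p * g⁻¹ ∈ N := by
      apply hkerN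
      rw [map_mul, map_inv, hc', mul_inv_cancel]
    have h1 : b ^ p * g⁻¹ ∈ R := hNle hker
    have h2 : b ^ p ∈ R := ⟨b, rfl⟩
    have h3 : g = (b ^ p * g⁻¹)⁻¹ * b ^ p := by group
    rw [h3]
    exact mul_mem (inv_mem h1) h2
  have hfwd : ∀ g : G, g ∈ R → π g ∈ RQ := by
    intro g hg
    obtain ⟨b, hb⟩ := hg
    have hb' : b ^ p = g := hb
    exact ⟨π b, by rw [powMonoidHom_apply, ← map_pow, hb']⟩
  have hQnc : ¬ IsCyclic Q := by
    intro hQc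
    obtain ⟨q, hq⟩ := hQc.exists_generator
    obtain ⟨g, rfl⟩ := hπsurj q
    apply hnc
    refine isCyclic_of_sup hp hG g ?_
    rw [eq_top_iff]
    intro w _
    obtain ⟨t, ht⟩ := hq (π w)
    have ht' : (π g) ^ t = π w := ht
    have h1 : w * (g ^ t)⁻¹ ∈ N := by
      apply hkerN
      rw [map_mul, map_inv, map_zpow, ht', mul_inv_cancel]
    refine Subgroup.mem_sup.2 ⟨g ^ t, zpow_mem (mem_zpowers g) t, (g ^ t)⁻¹ * w, ?_, ?_⟩
    · rw [mul_comm]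
      exact hNle h1
    · rw [← mul_assoc, mul_inv_cancel, one_mul]
  haveI hQnt : Nontrivial Q := by
    rcases subsingleton_or_nontrivial Q with h | h
    · exact absurd isCyclic_of_subsingleton hQnc
    · exact h
  have hQbound := ih (n - 1) (by omega) Q hQcard hQnc
  set MG := {H : Subgroup G | IsMaximalCyclic H} with hMG
  set MQ := {C : Subgroup Q | IsMaximalCyclic C} with hMQ
  have hlift : ∀ C : Subgroup Q, ∃ H : Subgroup G,
      C ∈ MQ → (H ∈ MG ∧ Subgroup.map π H = C) := by
    intro C
    by_cases hC : C ∈ MQ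
    · obtain ⟨c, rfl, hcR⟩ := exists_gen_of_maximal hp hQcard hC
      obtain ⟨g, rfl⟩ := hπsurj c
      have hgR : g ∉ R := fun hg => hcR (hfwd g hg)
      exact ⟨zpowers g, fun _ =>
        ⟨maximal_of_not_pow hp hG hgR, MonoidHom.map_zpowers π g⟩⟩
    · exact ⟨⊥, fun h => absurd h hC⟩
  choose F hF using hlift
  have hC₀max : IsMaximalCyclic (Subgroup.map π H₀) := by
    rw [hg₀, MonoidHom.map_zpowers]
    exact maximal_of_not_pow hp hQcard (fun hc => hg₀R (hpre g₀ hc))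
  set C₀ := Subgroup.map π H₀ with hC₀def
  have hC₀MQ : C₀ ∈ MQ := hC₀max
  set A := F '' (MQ \ {C₀}) with hAdef
  set B := (fun t : G => zpowers (g₀ * t)) '' (N : Set G) with hBdef
  have hg₀tR : ∀ t : G, t ∈ N → g₀ * t ∉ R := by
    intro t ht hmem
    apply hg₀R
    have h1 : g₀ = (g₀ * t) * t⁻¹ := by group
    rw [h1]
    exact mul_mem hmem (inv_mem (hNle ht))
  have hAsub : A ⊆ MG := by
    rintro H ⟨C, hC, rfl⟩
    exact (hF C hC.1).1
  have hBsub : B ⊆ MG := by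
    rintro H ⟨t, ht, rfl⟩
    exact maximal_of_not_pow hp hG (hg₀tR t ht)
  have hmapB : ∀ t : G, t ∈ N → Subgroup.map π (zpowers (g₀ * t)) = C₀ := by
    intro t ht
    rw [MonoidHom.map_zpowers, map_mul, hπmemN t ht, mul_one, hC₀def, hg₀,
      MonoidHom.map_zpowers]
  have hdisj : Disjoint A B := by
    rw [Set.disjoint_left]
    rintro H ⟨C, hC, rfl⟩ ⟨t, ht, hHt⟩
    have h1 : Subgroup.map π (F C) = C := (hF C hC.1).2
    have h2 := hmapB t ht
    simp only at hHt
    rw [hHt] at h2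
    exact hC.2 (Set.mem_singleton_iff.2 (by rw [← h1, h2]))
  have hFinj : Set.InjOn F (MQ \ {C₀}) := by
    intro C hC C' hC' hFF
    have h1 := (hF C hC.1).2
    have h2 := (hF C' hC'.1).2
    rw [← h1, ← h2, hFF]
  have hBinj : Set.InjOn (fun t : G => zpowers (g₀ * t)) (N : Set G) := by
    intro t ht t' ht' heq
    by_contra hne
    simp only at heq
    have h1 : g₀ * t' ∈ zpowers (g₀ * t) := by rw [heq]; exact mem_zpowers _
    have h2 : g₀ * t ∈ zpowers (g₀ * t) := mem_zpowers _
    have hw : t⁻¹ * t' ∈ zpowers (g₀ * t) := by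
      have h3 : t⁻¹ * t' = (g₀ * t)⁻¹ * (g₀ * t') := by group
      rw [h3]; exact mul_mem (inv_mem h2) h1
    have hwN : t⁻¹ * t' ∈ N := mul_mem (inv_mem ht) ht'
    have hw1 : t⁻¹ * t' ≠ 1 := by
      intro h
      exact hne (by rw [← inv_inv t, inv_mul_eq_one.1 h]; simp)
    have hwp : (t⁻¹ * t') ^ p = 1 := by
      obtain ⟨u, hu⟩ := hwN
      have hu' : y ^ u = t⁻¹ * t' := hu
      rw [← hu', ← zpow_natCast (y ^ u) p, ← zpow_mul, mul_comm, zpow_mul,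
        zpow_natCast, hyp, one_zpow]
    have hwo : orderOf (t⁻¹ * t') = p := orderOf_eq_prime hwp hw1
    have hNw : zpowers (t⁻¹ * t') = N :=
      sub_eq_of_le_of_card_le (zpowers_le.2 hwN)
        (by rw [hNcard, Nat.card_zpowers, hwo])
    have hNK : N ≤ zpowers (g₀ * t) := by rw [← hNw]; exact zpowers_le.2 hw
    have hg₀K : g₀ ∈ zpowers (g₀ * t) := by
      simpa using mul_mem h2 (inv_mem (hNK ht))
    have hH₀K : H₀ ≤ zpowers (g₀ * t) := by rw [hg₀]; exact zpowers_le.2 hg₀K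
    have hHK := hH₀max.2 _ (zpowers_isCyclic _) hH₀K
    rw [hHK] at hyH₀
    exact hyH₀ (hNK (mem_zpowers y))
  have hAcard : A.ncard = MQ.ncard - 1 := by
    rw [hAdef, Set.ncard_image_of_injOn hFinj,
      Set.ncard_diff_singleton_of_mem hC₀MQ]
  have hBcard : B.ncard = p := by
    rw [hBdef, Set.ncard_image_of_injOn hBinj, ← Nat.card_coe_set_eq]
    simpa using hNcard
  have hcount : MQ.ncard - 1 + p ≤ MG.ncard := by
    have hu := Set.ncard_union_eq hdisj (Set.toFinite A) (Set.toFinite B)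
    have hle := Set.ncard_le_ncard (Set.union_subset hAsub hBsub) (Set.toFinite MG)
    omega
  have hple := hp.two_le
  set a := (p - 1) * (n - 2) with hadef
  set b := (p - 1) * (n - 1 - 2) with hbdef
  have hmul : a ≤ b + (p - 1) := by
    have h5 : n - 2 ≤ n - 1 - 2 + 1 := by omega
    calc a ≤ (p - 1) * (n - 1 - 2 + 1) := Nat.mul_le_mul_left _ h5
      _ = b + (p - 1) := by rw [hbdef, Nat.mul_add, Nat.mul_one]
  omega

end MaxCycAux

theorem stmt6 {G : Type*} [CommGroup G] [Finite G] {p n : ℕ} (hp : p.Prime)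
    (hG : Nat.card G = p ^ n) (hnc : ¬ IsCyclic G) :
    {H : Subgroup G | IsMaximalCyclic H}.ncard ≥ (p - 1) * (n - 2) + p + 1 ∧
      {H : Subgroup G | IsMaximalCyclic H}.ncard ≥ n + 1 := by
  have h1 := MaxCycAux.main_bound hp n G hG hnc
  haveI hnt : Nontrivial G := by
    rcases subsingleton_or_nontrivial G with h | h
    · exact absurd isCyclic_of_subsingleton hnc
    · exact h
  haveI : Fact p.Prime := ⟨hp⟩
  have hn2 : 2 ≤ n := by
    by_contra hlt
    push_neg at hlt
    interval_cases n
    · rw [pow_zero] at hG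
      exact not_subsingleton G (Nat.card_eq_one_iff_unique.1 hG).1
    · rw [pow_one] at hG
      exact hnc (isCyclic_of_prime_card hG)
  refine ⟨h1, ?_⟩
  have hple := hp.two_le
  have hmul : n - 2 ≤ (p - 1) * (n - 2) := Nat.le_mul_of_pos_left _ (by omega)
  set a := (p - 1) * (n - 2) with ha
  omega
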